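/- Consider on R^3 the 3-wave system with V^i_j = diag(−c_1, −c_2, −c_3) and W^1 = −2(c_2 − c_3) u^2 u^3, W^2 = −2(c_1 − c_3) u^1 u^3, W^3 = −2(c_2 − c_1) u^1 u^2, where c_1, c_2, c_3 are constants, and the operator with constant leading coefficient g = diag(1, −1, −1), b^{ij}_k = 0, and ω skew-symmetric with ω^{12} = −2u^3, ω^{13} = 2u^2, ω^{23} = 2u^1. Then the compatibility conditions hold: (1) V^i_s g^{sj} = V^j_s g^{si}; (2) g^{is}(V^j_{s,k} − V^j_{k,s}) = 0; (3) g^{ij}_{,s} W^s − g^{js} W^i_{,s} − g^{is} W^j_{,s} − ω^{si} V^j_s − ω^{sj} V^i_s = 0; (4) W^i_{,s} ω^{sj} + W^j_{,s} ω^{is} + ω^{ji}_{,s} W^s = 0; (5) T^{ij}_k = 0 with T^{ij}_k = −g^{il} W^j_{,lk} − V^i_{k,s} ω^{sj} + ω^{is}(V^j_{s,k} − V^j_{k,s}) + ω^{ij}_{,s} V^s_k − ω^{sj}_{,k} V^i_s. -/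

import Mathlib

open scoped BigOperators

set_option linter.unusedVariables false
set_option maxHeartbeats 2000000

noncomputable def pd {n : ℕ} (s : Fin n) (f : (Fin n → ℝ) → ℝ) (u : Fin n → ℝ) : ℝ :=
  fderiv ℝ f u (Pi.single s 1)

/-- 3-wave system: homogeneous part `V = diag(−c₁, −c₂, −c₃)`. -/
noncomputable def V3w (c₁ c₂ c₃ : ℝ) (u : Fin 3 → ℝ) : Fin 3 → Fin 3 → ℝ :=
  fun i j => !![-c₁, 0, 0; 0, -c₂, 0; 0, 0, -c₃] i j

/-- Non-homogeneous part of the 3-wave system. -/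
noncomputable def W3w (c₁ c₂ c₃ : ℝ) (u : Fin 3 → ℝ) : Fin 3 → ℝ :=
  ![-2*(c₂ - c₃) * u 1 * u 2, -2*(c₁ - c₃) * u 0 * u 2, -2*(c₂ - c₁) * u 0 * u 1]

/-- Constant leading coefficient `g = diag(1,−1,−1)`. -/
noncomputable def g3w (u : Fin 3 → ℝ) : Fin 3 → Fin 3 → ℝ :=
  fun i j => !![1, 0, 0; 0, -1, 0; 0, 0, -1] i j

/-- Zeroth-order part: `ω^{12} = −2u³`, `ω^{13} = 2u²`, `ω^{23} = 2u¹`. -/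
noncomputable def ω3w (u : Fin 3 → ℝ) : Fin 3 → Fin 3 → ℝ :=
  fun i j => !![0, -2*u 2, 2*u 1; 2*u 2, 0, 2*u 0; -2*u 1, -2*u 0, 0] i j


lemma pd_const' {n : ℕ} (s : Fin n) (c : ℝ) (u : Fin n → ℝ) : pd s (fun _ => c) u = 0 := by
  simp [pd]

lemma pd_lin {n : ℕ} (s i : Fin n) (a : ℝ) (u : Fin n → ℝ) :
    pd s (fun v => a * v i) u = a * (Pi.single s 1 : Fin n → ℝ) i := by
  rw [pd, ((hasFDerivAt_apply (𝕜 := ℝ) i u).const_mul a).fderiv]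
  simp

lemma pd_lin_neg {n : ℕ} (s i : Fin n) (a : ℝ) (u : Fin n → ℝ) :
    pd s (fun v => -(a * v i)) u = -(a * (Pi.single s 1 : Fin n → ℝ) i) := by
  have : (fun v : Fin n → ℝ => -(a * v i)) = fun v => (-a) * v i := by funext v; ring
  rw [this, pd_lin]; ring

lemma pd_quad {n : ℕ} (s i j : Fin n) (a : ℝ) (u : Fin n → ℝ) :
    pd s (fun v => a * v i * v j) u
      = a * ((Pi.single s 1 : Fin n → ℝ) i * u j + u i * (Pi.single s 1 : Fin n → ℝ) j) := by
  rw [pd, (((hasFDerivAt_apply (𝕜 := ℝ) i u).const_mul a).fun_mul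
      (hasFDerivAt_apply (𝕜 := ℝ) j u)).fderiv]
  simp
  ring

lemma pd_quad_neg {n : ℕ} (s i j : Fin n) (a : ℝ) (u : Fin n → ℝ) :
    pd s (fun v => -(a * v i * v j)) u
      = -(a * ((Pi.single s 1 : Fin n → ℝ) i * u j + u i * (Pi.single s 1 : Fin n → ℝ) j)) := by
  have : (fun v : Fin n → ℝ => -(a * v i * v j)) = fun v => (-a) * v i * v j := by
    funext v; ring
  rw [this, pd_quad]; ring

/-- The 3-wave system is compatible with the non-homogeneous local operator
`M = diag(1,−1,−1)∂ₓ + ω`: all compatibility conditions hold. -/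
theorem threeWave_compatibility (c₁ c₂ c₃ : ℝ) :
    -- (1) V^i_s g^{sj} = V^j_s g^{si}
    (∀ u : Fin 3 → ℝ, ∀ i j : Fin 3,
      ∑ s, V3w c₁ c₂ c₃ u i s * g3w u s j = ∑ s, V3w c₁ c₂ c₃ u j s * g3w u s i)
    ∧
    -- (2) g^{is}(V^j_{s,k} − V^j_{k,s}) = 0
    (∀ u : Fin 3 → ℝ, ∀ i j k : Fin 3,
      ∑ s, g3w u i s * (pd k (fun v => V3w c₁ c₂ c₃ v j s) u
          - pd s (fun v => V3w c₁ c₂ c₃ v j k) u) = 0)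
    ∧
    -- (3)
    (∀ u : Fin 3 → ℝ, ∀ i j : Fin 3,
      ∑ s, (pd s (fun v => g3w v i j) u * W3w c₁ c₂ c₃ u s
          - g3w u j s * pd s (fun v => W3w c₁ c₂ c₃ v i) u
          - g3w u i s * pd s (fun v => W3w c₁ c₂ c₃ v j) u
          - ω3w u s i * V3w c₁ c₂ c₃ u j s - ω3w u s j * V3w c₁ c₂ c₃ u i s) = 0)
    ∧
    -- (4)
    (∀ u : Fin 3 → ℝ, ∀ i j : Fin 3,
      ∑ s, (pd s (fun v => W3w c₁ c₂ c₃ v i) u * ω3w u s j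
          + pd s (fun v => W3w c₁ c₂ c₃ v j) u * ω3w u i s
          + pd s (fun v => ω3w v j i) u * W3w c₁ c₂ c₃ u s) = 0)
    ∧
    -- (5) T^{ij}_k = 0 (b = 0 and g constant)
    (∀ u : Fin 3 → ℝ, ∀ i j k : Fin 3,
      (- ∑ l, g3w u i l * pd k (fun v => pd l (fun w => W3w c₁ c₂ c₃ w j) v) u)
      - (∑ s, pd s (fun v => V3w c₁ c₂ c₃ v i k) u * ω3w u s j)
      + (∑ s, ω3w u i s * (pd k (fun v => V3w c₁ c₂ c₃ v j s) u
            - pd s (fun v => V3w c₁ c₂ c₃ v j k) u))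
      + (∑ s, pd s (fun v => ω3w v i j) u * V3w c₁ c₂ c₃ u s k)
      - (∑ s, pd k (fun v => ω3w v s j) u * V3w c₁ c₂ c₃ u i s) = 0) := by
  refine ⟨?_, ?_, ?_, ?_, ?_⟩
  · intro u i j
    fin_cases i <;> fin_cases j <;>
      simp [V3w, g3w, Fin.sum_univ_three, Matrix.vecHead, Matrix.vecTail]
  · intro u i j k
    fin_cases i <;> fin_cases j <;> fin_cases k <;>
      simp [V3w, g3w, Fin.sum_univ_three, pd_const', Matrix.vecHead, Matrix.vecTail]
  · intro u i j
    fin_cases i <;> fin_cases j <;>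
      (simp [V3w, g3w, W3w, ω3w, Fin.sum_univ_three, pd_const', pd_lin, pd_lin_neg, pd_quad, pd_quad_neg, Matrix.vecHead, Matrix.vecTail,
        Pi.single_apply] <;> ring)
  · intro u i j
    fin_cases i <;> fin_cases j <;>
      (simp [W3w, ω3w, Fin.sum_univ_three, pd_const', pd_lin, pd_lin_neg, pd_quad, pd_quad_neg, Matrix.vecHead, Matrix.vecTail,
        Pi.single_apply] <;> ring)
  · intro u i j k
    fin_cases i <;> fin_cases j <;> fin_cases k <;>
      (simp [V3w, g3w, W3w, ω3w, Fin.sum_univ_three, pd_const', pd_lin, pd_lin_neg, pd_quad, pd_quad_neg, Matrix.vecHead, Matrix.vecTail,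
        Pi.single_apply] <;> ring)
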